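/- Let $p \geq 2$, $n \geq 1$, $t \geq p^{n-1}$ a real number, and $c_0,\dots,c_{n-1}$ real numbers. On the polytope $\tilde{\mathcal{U}}_t = \{u \in \mathbb{R}^n : u_0 \geq 1,\ u_i \geq p u_{i-1}\ (1 \leq i \leq n-1),\ u_{n-1} = t\}$, the maximum of the linear function $f(u) = \sum_m c_m u_m$ equals the maximum of $f$ over the $n$ points $v^{(m)} = (1, p, \dots, p^{m-1}, t/p^{n-1-m}, \dots, t/p, t)$ for $m = 0, 1, \dots, n-1$. -/

import Mathlib

theorem stmt17 (p n : ℕ) (hp : 2 ≤ p) (hn : 1 ≤ n) (t : ℝ) (ht : (p : ℝ) ^ (n - 1) ≤ t)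
    (c : ℕ → ℝ)
    (Ut : Set (ℕ → ℝ))
    (hUt : Ut = {u : ℕ → ℝ | 1 ≤ u 0 ∧
      (∀ i, 1 ≤ i → i ≤ n - 1 → (p : ℝ) * u (i - 1) ≤ u i) ∧ u (n - 1) = t})
    (v : ℕ → ℕ → ℝ)
    (hv : ∀ m j, v m j = if j < m then (p : ℝ) ^ j else t / (p : ℝ) ^ (n - 1 - j)) :
    (∀ m < n, v m ∈ Ut) ∧
    ∀ u ∈ Ut, ∃ m < n,
      ∑ l ∈ Finset.range n, c l * u l ≤ ∑ l ∈ Finset.range n, c l * v m l := by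
  obtain ⟨N, rfl⟩ : ∃ N, n = N + 1 := ⟨n - 1, by omega⟩
  have hN : N + 1 - 1 = N := rfl
  rw [hN] at ht hUt hv
  have hp1 : (1:ℝ) < (p:ℝ) := by exact_mod_cast (by omega : 1 < p)
  have hp0 : (0:ℝ) < (p:ℝ) := by linarith
  have hppos : ∀ k : ℕ, (0:ℝ) < (p:ℝ)^k := fun k => pow_pos hp0 k
  have htpos : (0:ℝ) < t := lt_of_lt_of_le (hppos N) ht
  have hpne : (p:ℝ) ≠ 0 := ne_of_gt hp0
  have hpkne : ∀ k : ℕ, ((p:ℝ)^k) ≠ 0 := fun k => ne_of_gt (hppos k)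
  -- key power identity
  have hpow : ∀ j, j ≤ N → (p:ℝ)^(N-j) * (p:ℝ)^j = (p:ℝ)^N := by
    intro j hj
    rw [← pow_add]
    congr 1
    omega
  -- membership of vertices
  have hmem : ∀ m < N + 1, v m ∈ Ut := by
    intro m hm
    rw [hUt]
    refine ⟨?_, ?_, ?_⟩
    · rw [hv]
      split_ifs with h
      · simp
      · rw [Nat.sub_zero, le_div_iff₀ (hppos N), one_mul]; exact ht
    · intro i h1 h2
      rw [hv, hv]
      rcases lt_trichotomy i m with h | h | h
      · rw [if_pos h, if_pos (by omega : i - 1 < m)]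
        rw [← pow_succ']
        apply le_of_eq
        congr 1
        omega
      · rw [if_neg (by omega : ¬ i < m), if_pos (by omega : i - 1 < m)]
        rw [← pow_succ']
        have : (p:ℝ)^(i-1+1) = (p:ℝ)^i := by congr 1; omega
        rw [this, le_div_iff₀ (hppos (N - i))]
        calc (p:ℝ)^i * (p:ℝ)^(N-i) = (p:ℝ)^N := by rw [mul_comm]; exact hpow i h2
          _ ≤ t := ht
      · rw [if_neg (by omega : ¬ i < m), if_neg (by omega : ¬ i - 1 < m)]
        apply le_of_eq
        rw [show N - (i-1) = (N - i) + 1 from by omega, pow_succ]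
        field_simp
    · rw [hv, if_neg (by omega : ¬ N < m), Nat.sub_self, pow_zero, div_one]
  refine ⟨hmem, ?_⟩
  intro u hu
  rw [hUt] at hu
  obtain ⟨hu0, humid, hulast⟩ := hu
  -- lower bounds p^j ≤ u j
  have hlow : ∀ j, j ≤ N → (p:ℝ)^j ≤ u j := by
    intro j
    induction j with
    | zero => intro _; simpa using hu0
    | succ k ih =>
      intro hk
      have h1 := humid (k+1) (by omega) (by omega)
      rw [Nat.add_sub_cancel] at h1
      calc (p:ℝ)^(k+1) = (p:ℝ) * (p:ℝ)^k := by ring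
        _ ≤ (p:ℝ) * u k := by
            have := ih (by omega)
            nlinarith
        _ ≤ u (k+1) := h1
  rcases eq_or_lt_of_le ht with heq | hlt
  · -- degenerate case t = p^N : all points coincide with (p^j)
    have hup : ∀ k, u (N - k) ≤ (p:ℝ)^(N-k) := by
      intro k
      induction k with
      | zero => rw [Nat.sub_zero, hulast, ← heq]
      | succ k ih =>
        by_cases hk : k < N
        · have h1 := humid (N - k) (by omega) (by omega)
          have h2 : N - k - 1 = N - (k+1) := by omega
          rw [h2] at h1
          have h3 : (p:ℝ)^(N-k) = (p:ℝ) * (p:ℝ)^(N-(k+1)) := by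
            rw [← pow_succ']; congr 1; omega
          have := le_trans h1 ih
          rw [h3] at this
          nlinarith
        · have h2 : N - (k+1) = N - k := by omega
          rw [h2]; exact ih
    have huv : ∀ j, j ≤ N → u j = (p:ℝ)^j := by
      intro j hj
      have := hup (N - j)
      have h2 : N - (N - j) = j := by omega
      rw [h2] at this
      exact le_antisymm this (hlow j hj)
    refine ⟨0, by omega, le_of_eq ?_⟩
    apply Finset.sum_congr rfl
    intro l hl
    rw [Finset.mem_range] at hl
    rw [hv, if_neg (by omega), huv l (by omega), ← heq,
      show ((p:ℝ)^N / (p:ℝ)^(N-l)) = (p:ℝ)^l from by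
        rw [div_eq_iff (ne_of_gt (hppos _)), mul_comm]; exact (hpow l (by omega)).symm]
  · -- main case t > p^N
    set A : ℕ → ℝ := fun j => t / (p:ℝ)^(N-j) with hA
    set B : ℕ → ℝ := fun j => (p:ℝ)^j with hB
    have hAB : ∀ j, j ≤ N → 0 < A j - B j := by
      intro j hj
      rw [hA, hB, sub_pos, lt_div_iff₀ (hppos _)]
      calc (p:ℝ)^j * (p:ℝ)^(N-j) = (p:ℝ)^N := by rw [mul_comm]; exact hpow j hj
        _ < t := hlt
    set s : ℕ → ℝ := fun j => (u j - B j) / (A j - B j) with hs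
    set S : ℕ → ℝ := fun m => if m = 0 then 0 else s (m-1) with hS
    set lam : ℕ → ℝ := fun m => S (m+1) - S m with hlam
    have hSsum : ∀ k, ∑ m ∈ Finset.range k, lam m = S k := by
      intro k
      rw [hlam]
      rw [Finset.sum_range_sub S k]
      simp [hS]
    have hsN : s N = 1 := by
      rw [hs, hA, hB]
      simp only [Nat.sub_self, pow_zero, div_one]
      rw [hulast, div_self (by linarith : t - (p:ℝ)^N ≠ 0)]
    have hmono : ∀ j, j + 1 ≤ N → s j ≤ s (j+1) := by
      intro j hj
      have h1 := humid (j+1) (by omega) (by omega)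
      rw [Nat.add_sub_cancel] at h1
      simp only [hs]
      have hA1 : A (j+1) = (p:ℝ) * A j := by
        simp only [hA]
        rw [show N - j = (N - (j+1)) + 1 from by omega, pow_succ]
        field_simp
      have hB1 : B (j+1) = (p:ℝ) * B j := by rw [hB]; ring
      rw [hA1, hB1]
      have hd : 0 < A j - B j := hAB j (by omega)
      rw [div_le_div_iff₀ hd (by nlinarith)]
      nlinarith
    have hlamnn : ∀ m, m ≤ N → 0 ≤ lam m := by
      intro m hm
      rw [hlam]
      match m with
      | 0 =>
        simp only [hS, if_pos rfl, if_neg one_ne_zero, sub_zero]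
        norm_num
        rw [hs, hB]
        apply div_nonneg
        · simp only [pow_zero]; linarith
        · exact le_of_lt (hAB 0 (by omega))
      | (k+1) =>
        simp only [hS, if_neg (Nat.succ_ne_zero _), if_neg (Nat.succ_ne_zero _),
          Nat.add_sub_cancel, sub_nonneg]
        exact hmono k (by omega)
    have hsum1 : ∑ m ∈ Finset.range (N+1), lam m = 1 := by
      rw [hSsum]
      simp only [hS, if_neg (Nat.succ_ne_zero _), Nat.add_sub_cancel]
      exact hsN
    have hrepr : ∀ j, j ≤ N → ∑ m ∈ Finset.range (N+1), lam m * v m j = u j := by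
      intro j hj
      have hsplit : ∑ m ∈ Finset.range (N+1), lam m * v m j =
          ∑ m ∈ Finset.Ico 0 (j+1), lam m * v m j + ∑ m ∈ Finset.Ico (j+1) (N+1), lam m * v m j := by
        rw [Finset.sum_Ico_consecutive _ (by omega) (by omega), Finset.range_eq_Ico]
      rw [hsplit]
      have h1 : ∑ m ∈ Finset.Ico 0 (j+1), lam m * v m j = s j * A j := by
        have : ∀ m ∈ Finset.Ico 0 (j+1), lam m * v m j = lam m * A j := by
          intro m hm
          rw [Finset.mem_Ico] at hm
          rw [hv, if_neg (by omega), hA]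
        rw [Finset.sum_congr rfl this, ← Finset.sum_mul, ← Finset.range_eq_Ico, hSsum]
        simp only [hS, if_neg (Nat.succ_ne_zero _), Nat.add_sub_cancel]
      have h2 : ∑ m ∈ Finset.Ico (j+1) (N+1), lam m * v m j = (1 - s j) * B j := by
        have : ∀ m ∈ Finset.Ico (j+1) (N+1), lam m * v m j = lam m * B j := by
          intro m hm
          rw [Finset.mem_Ico] at hm
          rw [hv, if_pos (by omega), hB]
        rw [Finset.sum_congr rfl this, ← Finset.sum_mul]
        have : ∑ m ∈ Finset.Ico (j+1) (N+1), lam m =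
            ∑ m ∈ Finset.range (N+1), lam m - ∑ m ∈ Finset.range (j+1), lam m := by
          rw [eq_sub_iff_add_eq, Finset.range_eq_Ico, add_comm]
          rw [Finset.range_eq_Ico]; exact Finset.sum_Ico_consecutive lam (by omega : 0 ≤ j+1) (by omega : j+1 ≤ N+1)
        rw [this, hsum1, hSsum]
        simp only [hS, if_neg (Nat.succ_ne_zero _), Nat.add_sub_cancel]
      rw [h1, h2, hs]
      have hd : A j - B j ≠ 0 := ne_of_gt (hAB j hj)
      field_simp
      ring
    -- pick the best vertex
    obtain ⟨m, hm, hmax⟩ := (Finset.range (N+1)).exists_max_image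
      (fun m => ∑ l ∈ Finset.range (N+1), c l * v m l) ⟨0, by simp⟩
    rw [Finset.mem_range] at hm
    refine ⟨m, hm, ?_⟩
    calc ∑ l ∈ Finset.range (N+1), c l * u l
        = ∑ l ∈ Finset.range (N+1), c l * (∑ m' ∈ Finset.range (N+1), lam m' * v m' l) := by
          apply Finset.sum_congr rfl
          intro l hl
          rw [Finset.mem_range] at hl
          rw [hrepr l (by omega)]
      _ = ∑ m' ∈ Finset.range (N+1), lam m' * ∑ l ∈ Finset.range (N+1), c l * v m' l := by
          simp only [Finset.mul_sum]
          rw [Finset.sum_comm]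
          apply Finset.sum_congr rfl
          intro m' _
          apply Finset.sum_congr rfl
          intro l _
          ring
      _ ≤ ∑ m' ∈ Finset.range (N+1), lam m' * ∑ l ∈ Finset.range (N+1), c l * v m l := by
          apply Finset.sum_le_sum
          intro m' hm'
          rw [Finset.mem_range] at hm'
          exact mul_le_mul_of_nonneg_left (hmax m' (Finset.mem_range.mpr hm')) (hlamnn m' (by omega))
      _ = ∑ l ∈ Finset.range (N+1), c l * v m l := by
          rw [← Finset.sum_mul, hsum1, one_mul]
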